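/- In every schedule of n jobs on m uniform machines that minimizes Σ_j C_j, the multiset of positional weights of the scheduled jobs consists of the n smallest elements of the multiset { ℓ/V_i : 1 ≤ i ≤ m, 1 ≤ ℓ ≤ n }, and for any two scheduled jobs J_j and J_ℓ whose positional weights satisfy ω_j < ω_ℓ, one has p_j ≥ p_ℓ. -/

import Mathlib

/-- A schedule of a finite set of jobs `J` on `m` uniform machines: each job gets a
machine and a (1-based) position, positions on each machine are pairwise distinct and
the occupied positions on each machine are exactly `1, …, η_i`. -/
structure Schedule (J : Type) (m : ℕ) where
  mach : J → Fin m
  pos : J → ℕ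
  pos_pos : ∀ j, 1 ≤ pos j
  inj : ∀ j j', mach j = mach j' → pos j = pos j' → j = j'
  contiguous : ∀ j, 2 ≤ pos j → ∃ j', mach j' = mach j ∧ pos j' = pos j - 1

namespace Schedule

variable {J : Type} {m : ℕ} [Fintype J]

/-- Number `η_i` of jobs scheduled on machine `i`. -/
def load (σ : Schedule J m) (i : Fin m) : ℕ :=
  (Finset.univ.filter fun j => σ.mach j = i).card

/-- Completion time of job `j`: jobs on a machine of speed `V i` are processed
consecutively from time 0 without idle time. -/
noncomputable def compl (σ : Schedule J m) (p : J → ℝ) (V : Fin m → ℝ) (j : J) : ℝ :=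
  (∑ j' ∈ Finset.univ.filter
      (fun j' => σ.mach j' = σ.mach j ∧ σ.pos j' ≤ σ.pos j), p j') / V (σ.mach j)

/-- Total completion time `Σ_j C_j` of a schedule. -/
noncomputable def totalC (σ : Schedule J m) (p : J → ℝ) (V : Fin m → ℝ) : ℝ :=
  ∑ j, σ.compl p V j

/-- Positional weight of job `j`: `(η_i + 1 - k)/V_i` where `k` is the position of `j`
on its machine `M_i`, which holds `η_i` jobs. -/
noncomputable def pw (σ : Schedule J m) (V : Fin m → ℝ) (j : J) : ℝ :=
  ((σ.load (σ.mach j) : ℝ) + 1 - (σ.pos j : ℝ)) / V (σ.mach j)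





end Schedule

/-- The `n` smallest elements (in non-decreasing order) of the multiset
`{ ℓ/V_i : 1 ≤ i ≤ m, 1 ≤ ℓ ≤ n }` of positional weights. -/
noncomputable def sortedWeights (m n : ℕ) (V : Fin m → ℝ) : List ℝ :=
  (((Finset.univ : Finset (Fin m × Fin n)).val.map
      (fun q => (((q.2 : ℕ) : ℝ) + 1) / V q.1)).sort (· ≤ ·)).take n

/-- The processing times sorted in non-increasing order. -/
noncomputable def sortedProcDesc {n : ℕ} (p : Fin n → ℝ) : List ℝ :=
  (((Finset.univ : Finset (Fin n)).val.map p).sort (· ≤ ·)).reverse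


lemma nat_downclosed_eq_Icc (T : Finset ℕ) (h1 : ∀ k ∈ T, 1 ≤ k)
    (h2 : ∀ k ∈ T, 2 ≤ k → k - 1 ∈ T) : T = Finset.Icc 1 T.card := by
  have key : ∀ k, k ∈ T → ∀ x, 1 ≤ x → x ≤ k → x ∈ T := by
    intro k
    induction k with
    | zero => intro hk x hx1 hx2; omega
    | succ k ih =>
      intro hk x hx1 hx2
      rcases Nat.lt_or_ge x (k+1) with h | h
      · have hk' : k ∈ T := by
          have := h2 _ hk (by omega)
          simpa using this
        exact ih hk' x hx1 (by omega)
      · have : x = k + 1 := by omega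
        rwa [this]
  have hsub : T ⊆ Finset.Icc 1 T.card := by
    intro k hk
    have : Finset.Icc 1 k ⊆ T := by
      intro x hx
      rw [Finset.mem_Icc] at hx
      exact key k hk x hx.1 hx.2
    have hcard : k ≤ T.card := by
      have := Finset.card_le_card this
      simpa using this
    rw [Finset.mem_Icc]
    exact ⟨h1 k hk, hcard⟩
  exact Finset.eq_of_subset_of_card_le hsub (by simp)

namespace Schedule

variable {J : Type} {m : ℕ} [Fintype J] [DecidableEq J]

lemma pos_injOn (σ : Schedule J m) (i : Fin m) :
    Set.InjOn σ.pos (Finset.univ.filter fun j => σ.mach j = i) := by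
  intro a ha b hb hab
  simp only [Finset.coe_filter, Set.mem_setOf_eq] at ha hb
  exact σ.inj a b (ha.2.trans hb.2.symm) hab

lemma image_pos (σ : Schedule J m) (i : Fin m) :
    (Finset.univ.filter fun j => σ.mach j = i).image σ.pos
      = Finset.Icc 1 (σ.load i) := by
  have hcard : ((Finset.univ.filter fun j => σ.mach j = i).image σ.pos).card = σ.load i :=
    Finset.card_image_of_injOn (σ.pos_injOn i)
  rw [← hcard]
  apply nat_downclosed_eq_Icc
  · intro k hk
    simp only [Finset.mem_image, Finset.mem_filter] at hk
    obtain ⟨j, _, rfl⟩ := hk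
    exact σ.pos_pos j
  · intro k hk h2
    simp only [Finset.mem_image, Finset.mem_filter] at hk ⊢
    obtain ⟨j, hj, rfl⟩ := hk
    obtain ⟨j', hj1, hj2⟩ := σ.contiguous j h2
    exact ⟨j', ⟨Finset.mem_univ _, hj1.trans hj.2⟩, hj2⟩

lemma pos_le_load (σ : Schedule J m) (j : J) : σ.pos j ≤ σ.load (σ.mach j) := by
  have : σ.pos j ∈ (Finset.univ.filter fun j' => σ.mach j' = σ.mach j).image σ.pos :=
    Finset.mem_image_of_mem _ (by simp)
  rw [image_pos] at this
  exact (Finset.mem_Icc.mp this).2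

lemma card_tail (σ : Schedule J m) (j : J) :
    (Finset.univ.filter fun j' => σ.mach j = σ.mach j' ∧ σ.pos j ≤ σ.pos j').card
      = σ.load (σ.mach j) + 1 - σ.pos j := by
  have h1 : (Finset.univ.filter fun j' => σ.mach j = σ.mach j' ∧ σ.pos j ≤ σ.pos j')
      = (Finset.univ.filter fun j' => σ.mach j' = σ.mach j).filter
          (fun j' => σ.pos j ≤ σ.pos j') := by
    ext x; simp [and_comm, eq_comm]
  rw [h1]
  have h2 : (((Finset.univ.filter fun j' => σ.mach j' = σ.mach j).filter
      (fun j' => σ.pos j ≤ σ.pos j')).image σ.pos)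
      = (Finset.Icc 1 (σ.load (σ.mach j))).filter (fun k => σ.pos j ≤ k) := by
    rw [← image_pos σ (σ.mach j)]
    exact (Finset.filter_image).symm
  have hinj : Set.InjOn σ.pos ((Finset.univ.filter fun j' => σ.mach j' = σ.mach j).filter
      (fun j' => σ.pos j ≤ σ.pos j')) := by
    apply (σ.pos_injOn (σ.mach j)).mono
    intro x hx
    simp only [Finset.coe_filter, Finset.mem_filter, Set.mem_setOf_eq] at hx ⊢
    exact ⟨hx.1.1, hx.1.2⟩
  have := Finset.card_image_of_injOn hinj
  rw [h2] at this
  rw [← this]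
  have : (Finset.Icc 1 (σ.load (σ.mach j))).filter (fun k => σ.pos j ≤ k)
      = Finset.Icc (σ.pos j) (σ.load (σ.mach j)) := by
    ext x
    simp only [Finset.mem_filter, Finset.mem_Icc]
    have := σ.pos_pos j
    omega
  rw [this, Nat.card_Icc]

lemma totalC_eq_sum_pw (σ : Schedule J m) (p : J → ℝ) (V : Fin m → ℝ) :
    σ.totalC p V = ∑ j, σ.pw V j * p j := by
  unfold totalC compl
  have hdiv : ∀ j : J, (∑ j' ∈ Finset.univ.filter
      (fun j' => σ.mach j' = σ.mach j ∧ σ.pos j' ≤ σ.pos j), p j') / V (σ.mach j)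
      = ∑ j' ∈ Finset.univ.filter
      (fun j' => σ.mach j' = σ.mach j ∧ σ.pos j' ≤ σ.pos j), p j' / V (σ.mach j) :=
    fun j => Finset.sum_div ..
  simp_rw [hdiv, Finset.sum_filter]
  rw [Finset.sum_comm]
  apply Finset.sum_congr rfl
  intro j' _
  have h1 : ∀ j : J, (if σ.mach j' = σ.mach j ∧ σ.pos j' ≤ σ.pos j
      then p j' / V (σ.mach j) else 0)
      = (if σ.mach j' = σ.mach j ∧ σ.pos j' ≤ σ.pos j then p j' / V (σ.mach j') else 0) := by
    intro j
    by_cases h : σ.mach j' = σ.mach j ∧ σ.pos j' ≤ σ.pos j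
    · rw [if_pos h, if_pos h, h.1]
    · rw [if_neg h, if_neg h]
  simp_rw [h1]
  rw [← Finset.sum_filter, Finset.sum_const, σ.card_tail j']
  have hle := σ.pos_le_load j'
  rw [pw, nsmul_eq_mul, Nat.cast_sub (by omega)]
  push_cast
  ring

/-- The schedule obtained by swapping the assignments of two jobs. -/
def swapSched (σ : Schedule J m) (a b : J) : Schedule J m where
  mach j := σ.mach (Equiv.swap a b j)
  pos j := σ.pos (Equiv.swap a b j)
  pos_pos j := σ.pos_pos _
  inj j j' h1 h2 := (Equiv.swap a b).injective (σ.inj _ _ h1 h2)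
  contiguous j h := by
    obtain ⟨j', h1, h2⟩ := σ.contiguous (Equiv.swap a b j) h
    refine ⟨Equiv.swap a b j', ?_, ?_⟩
    · simpa [Equiv.swap_apply_self] using h1
    · simpa [Equiv.swap_apply_self] using h2

lemma load_swapSched (σ : Schedule J m) (a b : J) (i : Fin m) :
    (σ.swapSched a b).load i = σ.load i := by
  unfold load swapSched
  have himg : (Finset.univ.filter fun j => σ.mach (Equiv.swap a b j) = i)
      = (Finset.univ.filter fun j => σ.mach j = i).image (Equiv.swap a b) := by
    ext x
    simp only [Finset.mem_filter, Finset.mem_univ, true_and, Finset.mem_image]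
    constructor
    · intro h
      exact ⟨Equiv.swap a b x, h, Equiv.swap_apply_self a b x⟩
    · rintro ⟨y, hy, rfl⟩
      rwa [Equiv.swap_apply_self]
  simp only []
  rw [himg, Finset.card_image_of_injective _ (Equiv.swap a b).injective]

lemma pw_swapSched (σ : Schedule J m) (a b : J) (V : Fin m → ℝ) (j : J) :
    (σ.swapSched a b).pw V j = σ.pw V (Equiv.swap a b j) := by
  unfold pw
  rw [show (σ.swapSched a b).mach j = σ.mach (Equiv.swap a b j) from rfl,
    show (σ.swapSched a b).pos j = σ.pos (Equiv.swap a b j) from rfl,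
    load_swapSched]

lemma swap_ineq (σ : Schedule J m) (p : J → ℝ) (V : Fin m → ℝ) (a b : J) (hab : a ≠ b)
    (hopt : σ.totalC p V ≤ (σ.swapSched a b).totalC p V) :
    0 ≤ (σ.pw V b - σ.pw V a) * (p a - p b) := by
  set e := Equiv.swap a b with he
  rw [totalC_eq_sum_pw, totalC_eq_sum_pw] at hopt
  have h2 : ∑ j, (σ.swapSched a b).pw V j * p j = ∑ j, σ.pw V j * p (e j) := by
    calc ∑ j, (σ.swapSched a b).pw V j * p j
        = ∑ j, σ.pw V (e j) * p (e (e j)) := by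
          apply Finset.sum_congr rfl
          intro j _
          rw [pw_swapSched, he, Equiv.swap_apply_self]
      _ = ∑ j, σ.pw V j * p (e j) := Equiv.sum_comp e (fun j => σ.pw V j * p (e j))
  rw [h2] at hopt
  have h3 : 0 ≤ ∑ j, (σ.pw V j * p (e j) - σ.pw V j * p j) := by
    rw [Finset.sum_sub_distrib]
    linarith
  have h4 : ∑ j, (σ.pw V j * p (e j) - σ.pw V j * p j)
      = ∑ j ∈ ({a, b} : Finset J), (σ.pw V j * p (e j) - σ.pw V j * p j) := by
    symm
    apply Finset.sum_subset (Finset.subset_univ _)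
    intro x _ hx
    simp only [Finset.mem_insert, Finset.mem_singleton] at hx
    push_neg at hx
    rw [he, Equiv.swap_apply_of_ne_of_ne hx.1 hx.2]
    ring
  rw [h4, Finset.sum_pair hab, he, Equiv.swap_apply_left, Equiv.swap_apply_right] at h3
  nlinarith [h3]

lemma pos_ge_two (σ : Schedule J m) {j j₁ : J} (h1 : σ.pos j₁ = 1) (hj : j ≠ j₁)
    (hm : σ.mach j = σ.mach j₁) : 2 ≤ σ.pos j := by
  have hp := σ.pos_pos j
  rcases Nat.lt_or_ge (σ.pos j) 2 with h | h
  · exact absurd (σ.inj j j₁ hm (by omega)) hj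
  · exact h

/-- Move job `j₁` (in position 1 on its machine) to position 1 on machine `i'`. -/
def moveSched (σ : Schedule J m) (j₁ : J) (i' : Fin m) (h1 : σ.pos j₁ = 1)
    (hne : σ.mach j₁ ≠ i') : Schedule J m where
  mach j := if j = j₁ then i' else σ.mach j
  pos j := if j = j₁ then 1 else
    if σ.mach j = σ.mach j₁ then σ.pos j - 1 else
    if σ.mach j = i' then σ.pos j + 1 else σ.pos j
  pos_pos j := by
    by_cases hj : j = j₁
    · simp [hj]
    · rw [if_neg hj]
      by_cases hm : σ.mach j = σ.mach j₁
      · rw [if_pos hm]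
        have := σ.pos_ge_two h1 hj hm
        omega
      · rw [if_neg hm]
        have := σ.pos_pos j
        split_ifs <;> omega
  inj j j' hm hp := by
    by_cases hj : j = j₁ <;> by_cases hj' : j' = j₁
    · rw [hj, hj']
    · exfalso
      rw [if_pos hj, if_neg hj'] at hm hp
      have hm2 : ¬ σ.mach j' = σ.mach j₁ := by
        rw [← hm]; exact fun hh => hne hh.symm
      rw [if_neg hm2, if_pos hm.symm] at hp
      have := σ.pos_pos j'
      omega
    · exfalso
      rw [if_neg hj, if_pos hj'] at hm hp
      have hm2 : ¬ σ.mach j = σ.mach j₁ := by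
        rw [hm]; exact fun hh => hne hh.symm
      rw [if_neg hm2, if_pos hm] at hp
      have := σ.pos_pos j
      omega
    · rw [if_neg hj, if_neg hj'] at hm hp
      by_cases hA : σ.mach j = σ.mach j₁
      · have hA' : σ.mach j' = σ.mach j₁ := by rw [← hm]; exact hA
        rw [if_pos hA, if_pos hA'] at hp
        have g1 := σ.pos_ge_two h1 hj hA
        have g2 := σ.pos_ge_two h1 hj' hA'
        exact σ.inj j j' hm (by omega)
      · have hA' : ¬ σ.mach j' = σ.mach j₁ := by rw [← hm]; exact hA
        rw [if_neg hA, if_neg hA'] at hp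
        by_cases hB : σ.mach j = i'
        · have hB' : σ.mach j' = i' := by rw [← hm]; exact hB
          rw [if_pos hB, if_pos hB'] at hp
          exact σ.inj j j' hm (by omega)
        · have hB' : ¬ σ.mach j' = i' := by rw [← hm]; exact hB
          rw [if_neg hB, if_neg hB'] at hp
          exact σ.inj j j' hm hp
  contiguous j h := by
    by_cases hj : j = j₁
    · rw [if_pos hj] at h; omega
    · rw [if_neg hj] at h
      by_cases hA : σ.mach j = σ.mach j₁
      · rw [if_pos hA] at h
        obtain ⟨j'', hm'', hp''⟩ := σ.contiguous j (by omega)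
        have hj'' : j'' ≠ j₁ := by
          intro hh
          rw [hh, h1] at hp''
          omega
        refine ⟨j'', ?_, ?_⟩
        · rw [if_neg hj'', if_neg hj]; exact hm''
        · rw [if_neg hj'', if_pos (show σ.mach j'' = σ.mach j₁ by rw [hm'']; exact hA),
            if_neg hj, if_pos hA]
          omega
      · by_cases hB : σ.mach j = i'
        · rw [if_neg hA, if_pos hB] at h
          by_cases hone : σ.pos j = 1
          · refine ⟨j₁, ?_, ?_⟩
            · rw [if_pos rfl, if_neg hj]; exact hB.symm
            · rw [if_pos rfl, if_neg hj, if_neg hA, if_pos hB, hone]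
          · obtain ⟨j'', hm'', hp''⟩ := σ.contiguous j (by have := σ.pos_pos j; omega)
            have hmB : σ.mach j'' = i' := by rw [hm'']; exact hB
            have hmA : ¬ σ.mach j'' = σ.mach j₁ := by
              rw [hmB]; exact fun hh => hne hh.symm
            have hj'' : j'' ≠ j₁ := by
              intro hh; rw [hh] at hmB; exact hne hmB
            refine ⟨j'', ?_, ?_⟩
            · rw [if_neg hj'', if_neg hj, hm'']
            · rw [if_neg hj'', if_neg hmA, if_pos hmB, if_neg hj, if_neg hA, if_pos hB]
              have := σ.pos_pos j
              omega
        · rw [if_neg hA, if_neg hB] at h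
          obtain ⟨j'', hm'', hp''⟩ := σ.contiguous j h
          have hmA : ¬ σ.mach j'' = σ.mach j₁ := by rw [hm'']; exact hA
          have hmB : ¬ σ.mach j'' = i' := by rw [hm'']; exact hB
          have hj'' : j'' ≠ j₁ := fun hh => hmA (by rw [hh])
          refine ⟨j'', ?_, ?_⟩
          · rw [if_neg hj'', if_neg hj]; exact hm''
          · rw [if_neg hj'', if_neg hmA, if_neg hmB, if_neg hj, if_neg hA, if_neg hB]
            exact hp''



variable {σ : Schedule J m} {j₁ : J} {i' : Fin m}

lemma load_moveSched_src (h1 : σ.pos j₁ = 1) (hne : σ.mach j₁ ≠ i') :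
    (σ.moveSched j₁ i' h1 hne).load (σ.mach j₁) = σ.load (σ.mach j₁) - 1 := by
  simp only [load, moveSched]
  have hset : (Finset.univ.filter fun j => (if j = j₁ then i' else σ.mach j) = σ.mach j₁)
      = (Finset.univ.filter fun j => σ.mach j = σ.mach j₁).erase j₁ := by
    ext x
    simp only [Finset.mem_filter, Finset.mem_univ, true_and, Finset.mem_erase]
    by_cases hx : x = j₁
    · subst hx
      simp [Ne.symm hne]
    · simp [hx]
  show (Finset.univ.filter fun j => (if j = j₁ then i' else σ.mach j) = σ.mach j₁).card = _
  rw [hset, Finset.card_erase_of_mem (by simp)]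

lemma load_moveSched_tgt (h1 : σ.pos j₁ = 1) (hne : σ.mach j₁ ≠ i') :
    (σ.moveSched j₁ i' h1 hne).load i' = σ.load i' + 1 := by
  simp only [load, moveSched]
  have hset : (Finset.univ.filter fun j => (if j = j₁ then i' else σ.mach j) = i')
      = insert j₁ (Finset.univ.filter fun j => σ.mach j = i') := by
    ext x
    simp only [Finset.mem_filter, Finset.mem_univ, true_and, Finset.mem_insert]
    by_cases hx : x = j₁
    · simp [hx]
    · simp [hx]
  show (Finset.univ.filter fun j => (if j = j₁ then i' else σ.mach j) = i').card = _
  rw [hset, Finset.card_insert_of_notMem (by simp [hne])]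

lemma load_moveSched_other (h1 : σ.pos j₁ = 1) (hne : σ.mach j₁ ≠ i') {i : Fin m}
    (hi1 : i ≠ σ.mach j₁) (hi2 : i ≠ i') :
    (σ.moveSched j₁ i' h1 hne).load i = σ.load i := by
  simp only [load, moveSched]
  show (Finset.univ.filter fun j => (if j = j₁ then i' else σ.mach j) = i).card = _
  congr 1
  ext x
  simp only [Finset.mem_filter, Finset.mem_univ, true_and]
  by_cases hx : x = j₁
  · subst hx
    simp [Ne.symm hi2, Ne.symm hi1]
  · simp [hx]

lemma pw_moveSched_ne (h1 : σ.pos j₁ = 1) (hne : σ.mach j₁ ≠ i') (V : Fin m → ℝ)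
    {j : J} (hj : j ≠ j₁) :
    (σ.moveSched j₁ i' h1 hne).pw V j = σ.pw V j := by
  have hmach : (σ.moveSched j₁ i' h1 hne).mach j = σ.mach j := by
    simp only [moveSched]
    rw [if_neg hj]
  unfold pw
  rw [hmach]
  by_cases hA : σ.mach j = σ.mach j₁
  · have hposj : (σ.moveSched j₁ i' h1 hne).pos j = σ.pos j - 1 := by
      simp only [moveSched]
      rw [if_neg hj, if_pos hA]
    have g2 := σ.pos_ge_two h1 hj hA
    have gl := σ.pos_le_load j
    rw [hposj, hA, load_moveSched_src h1 hne]
    rw [hA] at gl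
    rw [Nat.cast_sub (by omega), Nat.cast_sub (by omega)]
    push_cast
    ring_nf
  · by_cases hB : σ.mach j = i'
    · have hposj : (σ.moveSched j₁ i' h1 hne).pos j = σ.pos j + 1 := by
        simp only [moveSched]
        rw [if_neg hj, if_neg hA, if_pos hB]
      rw [hposj, hB, load_moveSched_tgt h1 hne]
      push_cast
      ring_nf
    · have hposj : (σ.moveSched j₁ i' h1 hne).pos j = σ.pos j := by
        simp only [moveSched]
        rw [if_neg hj, if_neg hA, if_neg hB]
      rw [hposj, load_moveSched_other h1 hne (fun h => hA h) (fun h => hB h)]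

lemma pw_moveSched_self (h1 : σ.pos j₁ = 1) (hne : σ.mach j₁ ≠ i') (V : Fin m → ℝ) :
    (σ.moveSched j₁ i' h1 hne).pw V j₁ = ((σ.load i' : ℝ) + 1) / V i' := by
  have hmach : (σ.moveSched j₁ i' h1 hne).mach j₁ = i' := by
    simp [moveSched]
  have hpos : (σ.moveSched j₁ i' h1 hne).pos j₁ = 1 := by
    simp [moveSched]
  unfold pw
  rw [hmach, hpos, load_moveSched_tgt h1 hne]
  push_cast
  ring_nf

lemma move_ineq (p : J → ℝ) (V : Fin m → ℝ) (h1 : σ.pos j₁ = 1) (hne : σ.mach j₁ ≠ i')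
    (hopt : σ.totalC p V ≤ (σ.moveSched j₁ i' h1 hne).totalC p V) (hp1 : 0 < p j₁) :
    ((σ.load (σ.mach j₁) : ℝ)) / V (σ.mach j₁) ≤ ((σ.load i' : ℝ) + 1) / V i' := by
  rw [totalC_eq_sum_pw, totalC_eq_sum_pw] at hopt
  rw [← Finset.add_sum_erase _ _ (Finset.mem_univ j₁),
    ← Finset.add_sum_erase _ (fun j => (σ.moveSched j₁ i' h1 hne).pw V j * p j)
      (Finset.mem_univ j₁)] at hopt
  have hsame : ∑ x ∈ Finset.univ.erase j₁, (σ.moveSched j₁ i' h1 hne).pw V x * p x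
      = ∑ x ∈ Finset.univ.erase j₁, σ.pw V x * p x := by
    apply Finset.sum_congr rfl
    intro x hx
    rw [pw_moveSched_ne h1 hne V (Finset.mem_erase.mp hx).1]
  rw [hsame] at hopt
  have h2 : σ.pw V j₁ * p j₁ ≤ (σ.moveSched j₁ i' h1 hne).pw V j₁ * p j₁ := by linarith
  rw [pw_moveSched_self h1 hne] at h2
  have h3 : σ.pw V j₁ = ((σ.load (σ.mach j₁) : ℝ)) / V (σ.mach j₁) := by
    rw [pw, h1]
    push_cast
    ring_nf
  rw [h3] at h2
  exact le_of_mul_le_mul_right h2 hp1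

lemma opt_pw_bound (p : J → ℝ) (V : Fin m → ℝ) (hp : ∀ j, 0 < p j) (hV : ∀ i, 0 < V i)
    (hopt : ∀ τ : Schedule J m, σ.totalC p V ≤ τ.totalC p V) (j : J) (i' : Fin m) :
    σ.pw V j ≤ ((σ.load i' : ℝ) + 1) / V i' := by
  have hload : σ.pw V j ≤ (σ.load (σ.mach j) : ℝ) / V (σ.mach j) := by
    rw [pw]
    apply (div_le_div_iff_of_pos_right (hV (σ.mach j))).mpr
    have := σ.pos_pos j
    have : (1:ℝ) ≤ (σ.pos j : ℝ) := by exact_mod_cast this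
    linarith
  by_cases hii : σ.mach j = i'
  · rw [← hii]
    refine hload.trans ?_
    apply (div_le_div_iff_of_pos_right (hV (σ.mach j))).mpr
    linarith
  · have h1mem : (1:ℕ) ∈ Finset.Icc 1 (σ.load (σ.mach j)) := by
      rw [Finset.mem_Icc]
      have a1 := σ.pos_pos j
      have a2 := σ.pos_le_load j
      omega
    rw [← image_pos σ (σ.mach j)] at h1mem
    obtain ⟨j₁', hj₁mem, hj₁pos⟩ := Finset.mem_image.mp h1mem
    have hj₁mach : σ.mach j₁' = σ.mach j := (Finset.mem_filter.mp hj₁mem).2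
    have hne' : σ.mach j₁' ≠ i' := by rw [hj₁mach]; exact hii
    have hkey := move_ineq p V hj₁pos hne' (hopt _) (hp j₁')
    rw [hj₁mach] at hkey
    exact hload.trans hkey

end Schedule


lemma multiset_take_sort (SS AA : Multiset ℝ) (h : SS ≤ AA)
    (hord : ∀ x ∈ SS, ∀ y ∈ AA - SS, x ≤ y) :
    ((AA.sort (· ≤ ·)).take (Multiset.card SS)) = SS.sort (· ≤ ·) := by
  have hmeq : (↑(SS.sort (· ≤ ·) ++ (AA - SS).sort (· ≤ ·)) : Multiset ℝ)
      = ↑(AA.sort (· ≤ ·)) := by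
    rw [Multiset.sort_eq]
    rw [show ((SS.sort (· ≤ ·) ++ (AA - SS).sort (· ≤ ·) : List ℝ) : Multiset ℝ)
        = (↑(SS.sort (· ≤ ·)) + ↑((AA - SS).sort (· ≤ ·)) : Multiset ℝ) from rfl]
    rw [Multiset.sort_eq, Multiset.sort_eq, add_tsub_cancel_of_le h]
  have hperm := Multiset.coe_eq_coe.mp hmeq
  have hsorted : List.Pairwise (· ≤ ·) (SS.sort (· ≤ ·) ++ (AA - SS).sort (· ≤ ·)) := by
    refine List.pairwise_append.mpr ⟨Multiset.pairwise_sort _ _, Multiset.pairwise_sort _ _, ?_⟩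
    intro x hx y hy
    exact hord x ((Multiset.mem_sort _).mp hx) y ((Multiset.mem_sort _).mp hy)
  have heq := List.Perm.eq_of_pairwise' hsorted (Multiset.pairwise_sort _ _) hperm
  rw [← heq]
  exact List.take_left' (Multiset.length_sort _)

lemma univ_val_fiber {J : Type} [Fintype J] [DecidableEq J] {m : ℕ} (f : J → Fin m) :
    (Finset.univ : Finset J).val
      = ∑ i : Fin m, (Finset.univ.filter fun j => f j = i).val := by
  ext a
  rw [Multiset.count_sum']
  have hcnt : ∀ i : Fin m, Multiset.count a (Finset.univ.filter fun j => f j = i).val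
      = if f a = i then 1 else 0 := by
    intro i
    by_cases h : f a = i
    · rw [if_pos h]
      exact Multiset.count_eq_one_of_mem (Finset.filter _ _).nodup (by simp [h])
    · rw [if_neg h]
      exact Multiset.count_eq_zero_of_notMem (by simp [h])
  simp_rw [hcnt]
  rw [Finset.sum_ite_eq, if_pos (Finset.mem_univ _)]
  exact Multiset.count_eq_one_of_mem Finset.univ.nodup
    (Finset.mem_val.mpr (Finset.mem_univ a))

lemma univ_map_fiber {J : Type} [Fintype J] [DecidableEq J] {m : ℕ} (f : J → Fin m)
    (g : J → ℝ) :
    (Finset.univ : Finset J).val.map g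
      = ∑ i : Fin m, ((Finset.univ.filter fun j => f j = i).val.map g) := by
  conv_lhs => rw [univ_val_fiber f]
  exact map_sum (Multiset.mapAddMonoidHom g)
    (fun i => (Finset.univ.filter fun j => f j = i).val) Finset.univ

lemma Icc_val_split {η n : ℕ} (h : η ≤ n) :
    (Finset.Icc 1 n).val = (Finset.Icc 1 η).val + (Finset.Ioc η n).val := by
  have hd : Disjoint (Finset.Icc 1 η) (Finset.Ioc η n) := by
    rw [Finset.disjoint_left]
    intro a ha hb
    rw [Finset.mem_Icc] at ha
    rw [Finset.mem_Ioc] at hb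
    omega
  have hu : Finset.Icc 1 n = (Finset.Icc 1 η).disjUnion (Finset.Ioc η n) hd := by
    ext a
    simp only [Finset.mem_disjUnion, Finset.mem_Icc, Finset.mem_Ioc]
    omega
  rw [hu]
  rfl

lemma prod_fiber_map {m : ℕ} (V : Fin m → ℝ) (n : ℕ) (i : Fin m) :
    (((Finset.univ : Finset (Fin m × Fin n)).filter fun q => q.1 = i).val.map
        (fun q => (((q.2 : ℕ) : ℝ) + 1) / V q.1))
      = (Finset.Icc 1 n).val.map (fun ℓ : ℕ => (ℓ : ℝ) / V i) := by
  have hinj : Set.InjOn (fun q : Fin m × Fin n => (q.2 : ℕ) + 1)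
      ((Finset.univ : Finset (Fin m × Fin n)).filter fun q => q.1 = i) := by
    intro a ha b hb hab
    simp only [Finset.coe_filter, Set.mem_setOf_eq] at ha hb
    have h2 : a.2 = b.2 := by
      apply Fin.ext
      simpa using hab
    exact Prod.ext (ha.2.trans hb.2.symm) h2
  have himg : ((Finset.univ : Finset (Fin m × Fin n)).filter fun q => q.1 = i).image
      (fun q => (q.2 : ℕ) + 1) = Finset.Icc 1 n := by
    ext x
    simp only [Finset.mem_image, Finset.mem_filter, Finset.mem_univ, true_and,
      Finset.mem_Icc]
    constructor
    · rintro ⟨q, hq, rfl⟩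
      have := q.2.isLt
      omega
    · intro hx
      exact ⟨(i, ⟨x - 1, by omega⟩), rfl, by simp; omega⟩
  have hval := Finset.image_val_of_injOn hinj
  rw [himg] at hval
  rw [hval, Multiset.map_map]
  apply Multiset.map_congr rfl
  intro q hq
  have hq1 : q.1 = i := (Finset.mem_filter.mp (Finset.mem_val.mp hq)).2
  simp only [Function.comp_apply]
  rw [hq1]
  push_cast
  ring

lemma Schedule.map_pw_machine {J : Type} {m : ℕ} [Fintype J] [DecidableEq J]
    (σ : Schedule J m) (V : Fin m → ℝ) (i : Fin m) :
    ((Finset.univ.filter fun j => σ.mach j = i).val.map (σ.pw V))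
      = (Finset.Icc 1 (σ.load i)).val.map (fun ℓ : ℕ => (ℓ : ℝ) / V i) := by
  have hinj : Set.InjOn (fun j => σ.load i + 1 - σ.pos j)
      (Finset.univ.filter fun j => σ.mach j = i) := by
    intro a ha b hb hab
    simp only [Finset.coe_filter, Set.mem_setOf_eq] at ha hb
    have pa := σ.pos_le_load a
    have pb := σ.pos_le_load b
    rw [ha.2] at pa
    rw [hb.2] at pb
    have pa1 := σ.pos_pos a
    have pb1 := σ.pos_pos b
    simp only at hab
    exact σ.inj a b (ha.2.trans hb.2.symm) (by omega)
  have himg : (Finset.univ.filter fun j => σ.mach j = i).image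
      (fun j => σ.load i + 1 - σ.pos j) = Finset.Icc 1 (σ.load i) := by
    ext x
    simp only [Finset.mem_image, Finset.mem_filter, Finset.mem_univ, true_and,
      Finset.mem_Icc]
    constructor
    · rintro ⟨j, hj, rfl⟩
      have p1 := σ.pos_pos j
      have p2 := σ.pos_le_load j
      rw [hj] at p2
      omega
    · intro hx
      have hmem : σ.load i + 1 - x ∈ Finset.Icc 1 (σ.load i) := by
        rw [Finset.mem_Icc]
        omega
      rw [← σ.image_pos i] at hmem
      obtain ⟨j, hj, hjx⟩ := Finset.mem_image.mp hmem
      refine ⟨j, (Finset.mem_filter.mp hj).2, by omega⟩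
  have hval := Finset.image_val_of_injOn hinj
  rw [himg] at hval
  rw [hval, Multiset.map_map]
  apply Multiset.map_congr rfl
  intro j hj
  have hj1 : σ.mach j = i := (Finset.mem_filter.mp (Finset.mem_val.mp hj)).2
  have p1 := σ.pos_pos j
  have p2 := σ.pos_le_load j
  rw [hj1] at p2
  simp only [Function.comp_apply]
  rw [Schedule.pw, hj1, Nat.cast_sub (by omega)]
  push_cast
  ring

/-- In every schedule minimizing `Σ_j C_j`, the multiset of positional
weights of the scheduled jobs consists of the `n` smallest elements of
`{ ℓ/V_i : 1 ≤ i ≤ m, 1 ≤ ℓ ≤ n }`, and whenever `ω_j < ω_ℓ` one has `p_j ≥ p_ℓ`. -/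
theorem optimal_schedule_posWeights_and_antitone
    {m n : ℕ} (p : Fin n → ℝ) (V : Fin m → ℝ)
    (hp : ∀ j, 0 < p j) (hV : ∀ i, 0 < V i)
    (σ : Schedule (Fin n) m)
    (hopt : ∀ τ : Schedule (Fin n) m, σ.totalC p V ≤ τ.totalC p V) :
    (Finset.univ.val.map (fun j => σ.pw V j)
        = (↑(sortedWeights m n V) : Multiset ℝ)) ∧
    ∀ j ℓ : Fin n, σ.pw V j < σ.pw V ℓ → p ℓ ≤ p j := by
  classical
  constructor
  · -- Part 1: the multiset of positional weights is the `n` smallest weights.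
    set AA : Multiset ℝ := (Finset.univ : Finset (Fin m × Fin n)).val.map
      (fun q => (((q.2 : ℕ) : ℝ) + 1) / V q.1) with hAA
    set SS : Multiset ℝ := Finset.univ.val.map (fun j => σ.pw V j) with hSS
    have hloadle : ∀ i, σ.load i ≤ n := by
      intro i
      calc σ.load i ≤ (Finset.univ : Finset (Fin n)).card := Finset.card_filter_le _ _
        _ = n := by simp
    have hSdec : SS = ∑ i : Fin m,
        (Finset.Icc 1 (σ.load i)).val.map (fun ℓ : ℕ => (ℓ : ℝ) / V i) := by
      rw [hSS, univ_map_fiber σ.mach]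
      exact Finset.sum_congr rfl fun i _ => σ.map_pw_machine V i
    have hAdec : AA = ∑ i : Fin m,
        ((Finset.Icc 1 (σ.load i)).val.map (fun ℓ : ℕ => (ℓ : ℝ) / V i)
          + (Finset.Ioc (σ.load i) n).val.map (fun ℓ : ℕ => (ℓ : ℝ) / V i)) := by
      rw [hAA, univ_map_fiber (fun q : Fin m × Fin n => q.1)]
      apply Finset.sum_congr rfl
      intro i _
      rw [prod_fiber_map V n i, Icc_val_split (hloadle i), Multiset.map_add]
    have hle : SS ≤ AA := by
      rw [hSdec, hAdec]
      apply Finset.sum_le_sum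
      intro i _
      exact le_add_of_nonneg_right (Multiset.zero_le _)
    have hbound : ∀ (j : Fin n) (i' : Fin m),
        σ.pw V j ≤ ((σ.load i' : ℝ) + 1) / V i' :=
      fun j i' => Schedule.opt_pw_bound p V hp hV hopt j i'
    have hord : ∀ x ∈ SS, ∀ y ∈ AA - SS, x ≤ y := by
      intro x hx y hy
      rw [hSS] at hx
      obtain ⟨j, _, rfl⟩ := Multiset.mem_map.mp hx
      have hyc : 0 < Multiset.count y (AA - SS) := Multiset.count_pos.mpr hy
      rw [Multiset.count_sub] at hyc
      have hcnt : Multiset.count y SS < Multiset.count y AA := by omega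
      have hT : ∃ i : Fin m,
          y ∈ (Finset.Ioc (σ.load i) n).val.map (fun ℓ : ℕ => (ℓ : ℝ) / V i) := by
        by_contra hc
        push_neg at hc
        have hco : Multiset.count y AA ≤ Multiset.count y SS := by
          rw [hSdec, hAdec, Multiset.count_sum', Multiset.count_sum']
          apply Finset.sum_le_sum
          intro i _
          rw [Multiset.count_add]
          have h0 : Multiset.count y
              ((Finset.Ioc (σ.load i) n).val.map (fun ℓ : ℕ => (ℓ : ℝ) / V i)) = 0 :=
            Multiset.count_eq_zero_of_notMem (hc i)
          omega
        omega
      obtain ⟨i, hi⟩ := hT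
      obtain ⟨ℓ, hℓ, rfl⟩ := Multiset.mem_map.mp hi
      have hℓ2 := Finset.mem_Ioc.mp (Finset.mem_val.mp hℓ)
      refine (hbound j i).trans ?_
      apply (div_le_div_iff_of_pos_right (hV i)).mpr
      have : (σ.load i + 1 : ℕ) ≤ ℓ := hℓ2.1
      exact_mod_cast this
    have hcard : Multiset.card SS = n := by rw [hSS]; simp
    have htake := multiset_take_sort SS AA hle hord
    rw [hcard] at htake
    have hsw : sortedWeights m n V = (Multiset.sort AA (· ≤ ·)).take n := by
      rw [hAA]
      rfl
    rw [hsw, htake, Multiset.sort_eq]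
  · -- Part 2: larger positional weight means smaller processing time.
    intro j ℓ hlt
    have hjl : j ≠ ℓ := fun h => absurd hlt (by rw [h]; exact lt_irrefl _)
    have hkey := Schedule.swap_ineq σ p V j ℓ hjl (hopt _)
    nlinarith [hkey, hlt]
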